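/- arXiv:1308.0312 — 3 statements merged into one kernel-verified Lean document; each statement's English description precedes it below -/
import Mathlib

section
/- Let t₁,…,t_{d+1} be positive naturals and let N₁,…,N_{d+1} be naturals with Σ N_j = n. Define iteratively c_i = (1/t_i)(1 - Σ_{j<i} t_j p_j). Then the iterated integral ∫₀^{c₁} dp₁/c₁ ⋯ ∫₀^{c_d} dp_d/c_d of p₁^{N₁}⋯p_d^{N_d} · [t_d(c_d - p_d)]^{n - Σ_{j≤d} N_j} is at least Π_{j=1}^{d} (1/t_j)^{N_j} · multinomial(n; N₁,…,N_d, n - Σ_{j≤d} N_j)⁻¹ · (n+1)^{-d}. -/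
open MeasureTheory

/-- The iterated integral `∫₀^{c₁} dp₁/c₁ ⋯` of the de Finetti construction, written
recursively: at each step the "remaining mass" is `r = 1 - Σ_{j<i} t_j p_j`, the upper
integration limit is `c_i = r / t_i`, and after the last step the integrand factor
`[t_d (c_d - p_d)]^M` equals the final remaining mass raised to the power `M`. -/
noncomputable def deFinettiInt (M : ℕ) : List (ℝ × ℕ) → ℝ → ℝ
  | [], r => r ^ M
  | (t, N) :: rest, r =>
      ∫ p in (0:ℝ)..(r / t), (t / r) * p ^ N * deFinettiInt M rest (r - t * p)

open intervalIntegral in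
lemma beta_nat (b : ℕ) : ∀ (a : ℕ) (c : ℝ), 0 ≤ c →
    ∫ x in (0:ℝ)..c, x ^ a * (c - x) ^ b
      = ((a.factorial * b.factorial : ℕ) : ℝ) / ((a + b + 1).factorial : ℝ) * c ^ (a + b + 1) := by
  induction b with
  | zero =>
      intro a c _
      simp only [pow_zero, mul_one, integral_pow]
      have hfa : (a.factorial : ℝ) ≠ 0 := by positivity
      have h : ((a.factorial * Nat.factorial 0 : ℕ):ℝ) / ((a+0+1).factorial : ℝ)
          = ((a:ℝ)+1)⁻¹ := by
        push_cast [Nat.factorial_succ]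
        field_simp
        ring
      rw [h, div_eq_inv_mul]
      norm_num [zero_pow]
  | succ b IH =>
      intro a c hc
      have key : ((a:ℝ) + 1) * ∫ x in (0:ℝ)..c, x ^ a * (c - x) ^ (b+1)
          = ((b:ℝ) + 1) * ∫ x in (0:ℝ)..c, x ^ (a+1) * (c - x) ^ b := by
        have hderiv : ∀ x ∈ Set.uIcc (0:ℝ) c,
            HasDerivAt (fun y : ℝ => y ^ (a+1) * (c - y) ^ (b+1))
              (((a:ℝ)+1) * x ^ a * (c - x) ^ (b+1) - ((b:ℝ)+1) * (x ^ (a+1) * (c - x) ^ b)) x := by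
          intro x _
          have h1 : HasDerivAt (fun y : ℝ => y ^ (a+1)) (((a:ℝ)+1) * x ^ a) x := by
            simpa using hasDerivAt_pow (a+1) x
          have h2 : HasDerivAt (fun y : ℝ => (c - y) ^ (b+1)) (-(((b:ℝ)+1) * (c - x) ^ b)) x := by
            have h3 : HasDerivAt (fun y : ℝ => c - y) (-1) x := by
              simpa using (hasDerivAt_id x).const_sub c
            have := (hasDerivAt_pow (b+1) (c - x)).comp x h3
            simpa [mul_comm, mul_assoc, mul_left_comm, Function.comp_def] using this
          have := h1.mul h2
          exact this.congr_deriv (by ring)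
        have hint := integral_eq_sub_of_hasDerivAt hderiv ?_
        · have h0 : (fun y : ℝ => y ^ (a+1) * (c - y) ^ (b+1)) c -
              (fun y : ℝ => y ^ (a+1) * (c - y) ^ (b+1)) 0 = 0 := by simp
          rw [h0] at hint
          have hi1 : IntervalIntegrable (fun x : ℝ => ((a:ℝ)+1) * x ^ a * (c - x) ^ (b+1))
              volume 0 c := (Continuous.intervalIntegrable (by continuity) _ _)
          have hi2 : IntervalIntegrable (fun x : ℝ => ((b:ℝ)+1) * (x ^ (a+1) * (c - x) ^ b))
              volume 0 c := (Continuous.intervalIntegrable (by continuity) _ _)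
          rw [integral_sub hi1 hi2, sub_eq_zero] at hint
          rw [intervalIntegral.integral_const_mul] at hint
          have : ∫ x in (0:ℝ)..c, ((a:ℝ)+1) * x ^ a * (c - x) ^ (b+1)
              = ((a:ℝ)+1) * ∫ x in (0:ℝ)..c, x ^ a * (c - x) ^ (b+1) := by
            rw [← intervalIntegral.integral_const_mul]
            congr 1; ext x; ring
          rw [this] at hint
          linarith [hint]
        · exact Continuous.intervalIntegrable (by continuity) _ _
      have ha : ((a:ℝ) + 1) ≠ 0 := by positivity
      have := IH (a+1) c hc
      have key2 : ∫ x in (0:ℝ)..c, x ^ a * (c - x) ^ (b+1)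
          = ((b:ℝ)+1) / ((a:ℝ)+1) * ∫ x in (0:ℝ)..c, x ^ (a+1) * (c - x) ^ b := by
        field_simp
        linarith [key]
      rw [key2, this]
      have harr : a + 1 + b + 1 = a + (b+1) + 1 := by ring
      rw [harr]
      have hfa : ((a+(b+1)+1).factorial : ℝ) ≠ 0 := by positivity
      field_simp
      push_cast [Nat.factorial_succ]
      ring

/-- The closed-form coefficient of the iterated integral. -/
noncomputable def dfC (M : ℕ) : List (ℝ × ℕ) → ℝ
  | [] => 1
  | (t, N) :: rest =>
      t⁻¹ ^ N *
        (((N.factorial * ((rest.map Prod.snd).sum + M).factorial : ℕ) : ℝ) /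
          ((((rest.map Prod.snd).sum + M) + N + 1).factorial : ℝ)) * dfC M rest

lemma deFinettiInt_eq (M : ℕ) : ∀ (L : List (ℝ × ℕ)), (∀ p ∈ L, 0 < p.1) → ∀ r : ℝ, 0 < r →
    deFinettiInt M L r = dfC M L * r ^ ((L.map Prod.snd).sum + M) := by
  intro L
  induction L with
  | nil => intro _ r _; simp [deFinettiInt, dfC]
  | cons hd rest IH =>
      obtain ⟨t, N⟩ := hd
      intro hpos r hr
      have ht : 0 < t := hpos (t, N) (by simp)
      have hrest : ∀ p ∈ rest, 0 < p.1 := fun p hp => hpos p (by simp [hp])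
      set m : ℕ := (rest.map Prod.snd).sum + M with hm
      have hc : 0 < r / t := by positivity
      have hK : deFinettiInt M ((t, N) :: rest) r
          = ∫ p in (0:ℝ)..(r / t), (t / r) * p ^ N * deFinettiInt M rest (r - t * p) := rfl
      have hcong : (∫ p in (0:ℝ)..(r / t), (t / r) * p ^ N * deFinettiInt M rest (r - t * p))
          = ∫ p in (0:ℝ)..(r / t),
              ((t / r) * dfC M rest * t ^ m) * (p ^ N * (r / t - p) ^ m) := by
        apply intervalIntegral.integral_congr_ae
        have h1 : ∀ᵐ p : ℝ ∂volume, p ≠ r / t := by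
          refine (MeasureTheory.ae_iff).2 ?_
          simp only [not_not, Set.setOf_eq_eq_singleton]
          exact Real.volume_singleton
        filter_upwards [h1] with p hp hpI
        rw [Set.uIoc_of_le hc.le] at hpI
        have hplt : p < r / t := lt_of_le_of_ne hpI.2 hp
        have hrp : 0 < r - t * p := by
          have : t * p < t * (r / t) := by
            exact (mul_lt_mul_iff_right₀ ht).2 hplt
          rw [mul_div_cancel₀ r ht.ne'] at this
          linarith
        rw [IH hrest (r - t * p) hrp]
        have hsub : r - t * p = t * (r / t - p) := by
          field_simp
        rw [hsub, mul_pow]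
        ring
      rw [hK, hcong, intervalIntegral.integral_const_mul, beta_nat m N (r / t) hc.le]
      have hlist : (((t, N) :: rest).map Prod.snd).sum + M = N + m := by
        simp [hm]; ring
      rw [hlist]
      show (t / r) * dfC M rest * t ^ m *
          (((N.factorial * m.factorial : ℕ) : ℝ) / ((N + m + 1).factorial : ℝ) * (r/t) ^ (N + m + 1))
        = t⁻¹ ^ N * (((N.factorial * m.factorial : ℕ) : ℝ) / ((m + N + 1).factorial : ℝ))
            * dfC M rest * r ^ (N + m)
      have he : N + m + 1 = m + N + 1 := by ring
      rw [he, div_pow, inv_pow]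
      have htne : t ≠ 0 := ht.ne'
      have hrne : r ≠ 0 := hr.ne'
      have hfne : (((m + N + 1).factorial : ℕ) : ℝ) ≠ 0 := by positivity
      field_simp
      ring

lemma dfC_ge (n M : ℕ) : ∀ L : List (ℝ × ℕ), (∀ p ∈ L, 0 < p.1) →
    (L.map Prod.snd).sum + M ≤ n →
    (L.map (fun p => p.1⁻¹ ^ p.2)).prod *
        (((M.factorial * (L.map (fun p => p.2.factorial)).prod : ℕ) : ℝ) /
          ((((L.map Prod.snd).sum + M)).factorial : ℝ)) *
        (((n : ℝ) + 1)⁻¹) ^ L.length ≤ dfC M L := by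
  intro L
  induction L with
  | nil =>
      intro _ _
      have hMf : ((M.factorial : ℕ) : ℝ) ≠ 0 := by positivity
      simp [dfC, div_self hMf]
  | cons hd rest IH =>
      obtain ⟨t, N⟩ := hd
      intro hpos hle
      have ht : 0 < t := hpos (t, N) (by simp)
      have hrest : ∀ p ∈ rest, 0 < p.1 := fun p hp => hpos p (by simp [hp])
      set m : ℕ := (rest.map Prod.snd).sum + M with hm
      have hsum0 : ((((t,N) :: rest).map Prod.snd).sum + M) = N + m := by
        simp only [List.map_cons, List.sum_cons, hm]
        omega
      have hle' : N + m ≤ n := hsum0 ▸ hle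
      have hlerest : (rest.map Prod.snd).sum + M ≤ n :=
        le_trans (by rw [← hm]; exact Nat.le_add_left m N) hle'
      have IH' := IH hrest hlerest
      set A : ℝ := (rest.map (fun p => p.1⁻¹ ^ p.2)).prod with hA
      have hApos : 0 < A := by
        rw [hA]
        apply List.prod_pos
        intro x hx
        simp only [List.mem_map] at hx
        obtain ⟨p, hp, rfl⟩ := hx
        have := hrest p hp
        positivity
      set factor : ℝ := t⁻¹ ^ N *
          (((N.factorial * m.factorial : ℕ) : ℝ) / (((m + N + 1)).factorial : ℝ)) with hfac
      have hfacpos : 0 < factor := by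
        rw [hfac]; positivity
      have hdfc : dfC M ((t, N) :: rest) = factor * dfC M rest := rfl
      have step2 : factor * ((rest.map (fun p => p.1⁻¹ ^ p.2)).prod *
            (((M.factorial * (rest.map (fun p => p.2.factorial)).prod : ℕ) : ℝ) /
              ((m).factorial : ℝ)) * (((n : ℝ) + 1)⁻¹) ^ rest.length)
          ≤ factor * dfC M rest :=
        mul_le_mul_of_nonneg_left IH' hfacpos.le
      refine le_trans ?_ (hdfc ▸ step2)
      -- the pure arithmetic step
      have hkey : (((m + N + 1).factorial : ℕ) : ℝ)
          ≤ (((N + m).factorial : ℕ) : ℝ) * ((n : ℝ) + 1) := by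
        have h1 : (m + N + 1).factorial = (N + m + 1) * (N + m).factorial := by
          rw [show m + N + 1 = (N + m) + 1 by ring, Nat.factorial_succ]
        rw [h1]
        push_cast
        have : ((N : ℝ) + m + 1) ≤ (n : ℝ) + 1 := by
          exact_mod_cast Nat.add_le_add_right hle' 1
        nlinarith [(Nat.cast_pos (α := ℝ)).2 (Nat.factorial_pos (N + m)), this]
      have hfm : ((m.factorial : ℕ) : ℝ) ≠ 0 := by positivity
      have hfnm : (((N + m).factorial : ℕ) : ℝ) ≠ 0 := by positivity
      have hfmn1 : (((m + N + 1).factorial : ℕ) : ℝ) ≠ 0 := by positivity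
      rw [hsum0]
      have hlen : ((t,N) :: rest).length = rest.length + 1 := rfl
      rw [hlen]
      set B : ℝ := t⁻¹ ^ N * A *
          ((M.factorial : ℝ) * ((rest.map (fun p => p.2.factorial)).prod : ℕ) * (N.factorial : ℝ)) *
          (((n : ℝ) + 1)⁻¹) ^ rest.length with hB
      have hBpos : 0 ≤ B := by
        rw [hB]; positivity
      have lhs_eq : (((t,N) :: rest).map (fun p => p.1⁻¹ ^ p.2)).prod *
            (((M.factorial * (((t,N) :: rest).map (fun p => p.2.factorial)).prod : ℕ) : ℝ) /
              (((N + m)).factorial : ℝ)) * (((n : ℝ) + 1)⁻¹) ^ (rest.length + 1)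
          = B * ((((N + m).factorial : ℕ) : ℝ) * ((n : ℝ) + 1))⁻¹ := by
        simp only [List.map_cons, List.prod_cons, hB, ← hA]
        push_cast
        rw [mul_inv]
        have hn1 : ((n:ℝ)+1) ≠ 0 := by positivity
        field_simp
        rw [pow_succ]
        field_simp
      have rhs_eq : factor * (A *
            (((M.factorial * (rest.map (fun p => p.2.factorial)).prod : ℕ) : ℝ) /
              ((m).factorial : ℝ)) * (((n : ℝ) + 1)⁻¹) ^ rest.length)
          = B * (((m + N + 1).factorial : ℕ) : ℝ)⁻¹ := by
        rw [hfac, hB]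
        push_cast
        field_simp
      rw [lhs_eq, rhs_eq]
      apply mul_le_mul_of_nonneg_left _ hBpos
      exact inv_anti₀ (by positivity) (by rw [mul_comm] at hkey ⊢; exact hkey)


lemma list_prod_range {β : Type*} [CommMonoid β] (f : ℕ → β) (d : ℕ) :
    ((List.range d).map f).prod = ∏ j ∈ Finset.range d, f j := by
  induction d with
  | zero => simp
  | succ d ih => rw [List.range_succ, Finset.prod_range_succ]; simp [ih]

lemma list_sum_range (f : ℕ → ℕ) (d : ℕ) :
    ((List.range d).map f).sum = ∑ j ∈ Finset.range d, f j := by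
  induction d with
  | zero => simp
  | succ d ih => rw [List.range_succ, Finset.sum_range_succ]; simp [ih]

/-- Key analytic estimate: the iterated integral
`∫₀^{c₁} dp₁/c₁ ⋯ ∫₀^{c_d} dp_d/c_d  p₁^{N₁}⋯p_d^{N_d} [t_d(c_d - p_d)]^{n-Σ_{j≤d}N_j}`
is at least `Π_{j=1}^d (1/t_j)^{N_j} · multinomial(n; N₁,…,N_d, n-Σ_{j≤d}N_j)⁻¹ · (n+1)^{-d}`.
(Here indices are 0-based: `t 0, …, t d` and `N 0, …, N d` play the roles of
`t₁,…,t_{d+1}` and `N₁,…,N_{d+1}`, with `N d = n - Σ_{j≤d} N_j`.) -/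
theorem deFinetti_iterated_integral_lower_bound (d n : ℕ) (t : ℕ → ℕ) (N : ℕ → ℕ)
    (ht : ∀ j, 0 < t j)
    (hsum : ∑ j ∈ Finset.range (d + 1), N j = n) :
    (∏ j ∈ Finset.range d, ((t j : ℝ))⁻¹ ^ (N j)) *
        ((Nat.multinomial (Finset.range (d + 1)) N : ℝ))⁻¹ * (((n : ℝ) + 1))⁻¹ ^ d ≤
      deFinettiInt (N d) ((List.range d).map (fun j => ((t j : ℝ), N j))) 1 := by
  set L : List (ℝ × ℕ) := (List.range d).map (fun j => ((t j : ℝ), N j)) with hL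
  have hpos : ∀ p ∈ L, 0 < p.1 := by
    intro p hp
    rw [hL, List.mem_map] at hp
    obtain ⟨j, _, rfl⟩ := hp
    simpa using (show ((0:ℕ):ℝ) < ((t j : ℕ):ℝ) by exact_mod_cast ht j)
  have hmap_snd : (L.map Prod.snd).sum = ∑ j ∈ Finset.range d, N j := by
    rw [hL, List.map_map]
    exact list_sum_range _ d
  have hS : (L.map Prod.snd).sum + N d = n := by
    rw [hmap_snd, ← Finset.sum_range_succ]
    exact hsum
  have h1 : deFinettiInt (N d) L 1 = dfC (N d) L := by
    rw [deFinettiInt_eq (N d) L hpos 1 one_pos, one_pow, mul_one]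
  have hge := dfC_ge n (N d) L hpos (le_of_eq hS)
  rw [h1]
  refine le_trans (le_of_eq ?_) hge
  -- equality of the two lower-bound expressions
  have hprod1 : (L.map (fun p => p.1⁻¹ ^ p.2)).prod
      = ∏ j ∈ Finset.range d, ((t j : ℝ))⁻¹ ^ (N j) := by
    rw [hL, List.map_map]
    exact list_prod_range _ d
  have hprod2 : (L.map (fun p => p.2.factorial)).prod
      = ∏ j ∈ Finset.range d, (N j).factorial := by
    rw [hL, List.map_map]
    exact list_prod_range _ d
  have hlen : L.length = d := by rw [hL]; simp
  have hspec := Nat.multinomial_spec (Finset.range (d+1)) N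
  rw [hsum] at hspec
  have hcast : ((∏ j ∈ Finset.range (d+1), (N j).factorial : ℕ) : ℝ)
      * (Nat.multinomial (Finset.range (d+1)) N : ℝ) = (n.factorial : ℝ) := by
    exact_mod_cast hspec
  have hmulne : (Nat.multinomial (Finset.range (d+1)) N : ℝ) ≠ 0 := by
    exact_mod_cast (Nat.multinomial_pos _ _).ne'
  have hnfne : ((n.factorial : ℕ) : ℝ) ≠ 0 := by positivity
  have hinv : (Nat.multinomial (Finset.range (d+1)) N : ℝ)⁻¹
      = ((∏ j ∈ Finset.range (d+1), (N j).factorial : ℕ) : ℝ) / (n.factorial : ℝ) := by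
    rw [eq_div_iff hnfne, ← hcast]
    field_simp
  have hN : (N d).factorial * (L.map (fun p => p.2.factorial)).prod
      = ∏ j ∈ Finset.range (d+1), (N j).factorial := by
    rw [hprod2, Finset.prod_range_succ]
    ring
  rw [hinv, hS, hprod1, hlen, ← hN]
end

section
/- Let t₁,…,t_{d+1} be positive naturals, and N₁,…,N_{d+1} naturals with Σ_{j=1}^{d+1} N_j = n. Then the general de Finetti state value τ(a|x) = ∫₀^{c₁} dp₁/c₁ ⋯ ∫₀^{c_d} dp_d/c_d · p₁^{N₁}⋯p_d^{N_d} · [(1/t_{d+1})(1 - Σ_{j=1}^d t_j p_j)]^{N_{d+1}} satisfies τ(a|x) ≥ Π_{j=1}^{d+1} (1/t_j)^{N_j} · multinomial(n; N₁,…,N_{d+1})⁻¹ · (n+1)^{-d}, where c_i = (1/t_i)(1 - Σ_{j<i} t_j p_j). -/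
open MeasureTheory

lemma prod_cast_factorial (N m : ℕ) :
    (N.factorial : ℂ) * ∏ j ∈ Finset.range (m+1), ((N:ℂ)+1+j) = ((N+m+1).factorial : ℂ) := by
  induction m with
  | zero =>
      simp [Nat.factorial_succ]
      ring
  | succ m ih =>
      rw [Finset.prod_range_succ, ← mul_assoc, ih]
      have h2 : ((N + (m+1) + 1).factorial : ℂ) = ((N+m+1+1 : ℕ) : ℂ) * (N+m+1).factorial := by
        rw [show N + (m+1) + 1 = (N+m+1)+1 from by omega, Nat.factorial_succ]
        push_cast
        ring
      rw [h2]
      push_cast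
      ring

lemma beta_nat_s13 (N m : ℕ) :
    ∫ x in (0:ℝ)..1, x ^ N * (1 - x) ^ m
      = (N.factorial : ℝ) * m.factorial / (N + m + 1).factorial := by
  have hu : 0 < Complex.re ((N:ℂ) + 1) := by
    simp only [Complex.add_re, Complex.natCast_re, Complex.one_re]
    positivity
  have h := Complex.betaIntegral_eval_nat_add_one_right hu m
  rw [Complex.betaIntegral] at h
  have h1 : ∀ x : ℝ, (x:ℂ) ^ ((N:ℂ) + 1 - 1) * ((1:ℂ) - x) ^ ((m:ℂ) + 1 - 1)
      = ((x ^ N * (1 - x) ^ m : ℝ) : ℂ) := by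
    intro x
    rw [add_sub_cancel_right, add_sub_cancel_right, Complex.cpow_natCast, Complex.cpow_natCast]
    push_cast
    ring
  simp only [h1] at h
  rw [intervalIntegral.integral_ofReal] at h
  have hN : (N.factorial : ℂ) ≠ 0 := by exact_mod_cast N.factorial_ne_zero
  have hNm : (((N+m+1).factorial : ℕ) : ℂ) ≠ 0 := by exact_mod_cast (N+m+1).factorial_ne_zero
  have h3 : (∏ j ∈ Finset.range (m+1), ((N:ℂ)+1+j)) = ((N+m+1).factorial : ℂ) / N.factorial := by
    field_simp
    linear_combination prod_cast_factorial N m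
  rw [h3] at h
  have h4 : ((∫ x in (0:ℝ)..1, x ^ N * (1 - x) ^ m : ℝ) : ℂ)
      = (((N.factorial : ℝ) * m.factorial / (N + m + 1).factorial : ℝ) : ℂ) := by
    rw [h]
    push_cast
    rw [div_div_eq_mul_div]
    ring
  exact_mod_cast h4

lemma int_scaled (N m : ℕ) {t r : ℝ} (ht : 0 < t) (hr : 0 < r) :
    ∫ p in (0:ℝ)..(r/t), (t/r) * p ^ N * (r - t * p) ^ m
      = t⁻¹ ^ N * r ^ (N + m) * ((N.factorial : ℝ) * m.factorial / (N + m + 1).factorial) := by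
  have key := intervalIntegral.smul_integral_comp_mul_left
      (f := fun p => (t/r) * p ^ N * (r - t * p) ^ m) (a := 0) (b := 1) (r/t)
  rw [mul_zero, mul_one] at key
  rw [← key]
  have hint : ∀ x : ℝ, (t/r) * ((r/t) * x) ^ N * (r - t * ((r/t)*x)) ^ m
      = ((t/r) * (r/t)^N * r^m) * (x ^ N * (1-x) ^ m) := by
    intro x
    have h1 : r - t * ((r/t)*x) = r * (1 - x) := by
      field_simp
    rw [h1, mul_pow r (1-x), mul_pow (r/t) x]
    ring
  simp only [hint]
  rw [intervalIntegral.integral_const_mul, beta_nat_s13, smul_eq_mul]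
  field_simp
  ring

noncomputable def betaFac (M : ℕ) : List ℕ → ℝ
  | [] => 1
  | N :: rest =>
      (N.factorial : ℝ) * (M + rest.sum).factorial / (N + (M + rest.sum) + 1).factorial
        * betaFac M rest

lemma deFinettiInt_eval (M : ℕ) : ∀ (l : List (ℝ × ℕ)) (r : ℝ),
    (∀ p ∈ l, 0 < p.1) → 0 < r →
    deFinettiInt M l r = ((l.map (fun p => (p.1)⁻¹ ^ p.2)).prod) *
      r ^ (M + (l.map Prod.snd).sum) * betaFac M (l.map Prod.snd)
  | [], r, _, hr => by simp [deFinettiInt, betaFac]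
  | (t, N) :: rest, r, hl, hr => by
    have ht : 0 < t := hl (t, N) List.mem_cons_self
    have hrest : ∀ p ∈ rest, 0 < p.1 := fun p hp => hl p (List.mem_cons_of_mem _ hp)
    have hcong : (∫ p in (0:ℝ)..(r / t), (t / r) * p ^ N * deFinettiInt M rest (r - t * p))
        = ∫ p in (0:ℝ)..(r / t), (t / r) * p ^ N *
            (((rest.map (fun p => (p.1)⁻¹ ^ p.2)).prod * betaFac M (rest.map Prod.snd))
              * (r - t * p) ^ (M + (rest.map Prod.snd).sum)) := by
      apply intervalIntegral.integral_congr_ae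
      have hnull : (volume : Measure ℝ) {r / t} = 0 := measure_singleton _
      filter_upwards [compl_mem_ae_iff.mpr hnull] with x hx hxmem
      have hx' : x ≠ r / t := hx
      rw [Set.uIoc_of_le (by positivity)] at hxmem
      have hlt : x < r / t := lt_of_le_of_ne hxmem.2 hx'
      have hpos : 0 < r - t * x := by
        have h2 : x * t < r := (lt_div_iff₀ ht).mp hlt
        nlinarith
      rw [deFinettiInt_eval M rest (r - t * x) hrest hpos]
      ring
    show (∫ p in (0:ℝ)..(r / t), (t / r) * p ^ N * deFinettiInt M rest (r - t * p)) = _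
    rw [hcong]
    have hre : ∀ p : ℝ, (t/r) * p ^ N *
        (((rest.map (fun p => (p.1)⁻¹ ^ p.2)).prod * betaFac M (rest.map Prod.snd))
          * (r - t * p) ^ (M + (rest.map Prod.snd).sum))
        = ((rest.map (fun p => (p.1)⁻¹ ^ p.2)).prod * betaFac M (rest.map Prod.snd))
          * ((t/r) * p ^ N * (r - t * p) ^ (M + (rest.map Prod.snd).sum)) := fun p => by ring
    simp only [hre]
    rw [intervalIntegral.integral_const_mul, int_scaled N (M + (rest.map Prod.snd).sum) ht hr]
    simp only [List.map_cons, List.prod_cons, List.sum_cons, betaFac]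
    ring

def cmul (M : ℕ) : List ℕ → ℕ
  | [] => 1
  | N :: rest => (N + (M + rest.sum)).choose N * cmul M rest

lemma choose_fact (N s : ℕ) :
    (N + s).choose N * N.factorial * s.factorial = (N + s).factorial := by
  have := Nat.choose_mul_factorial_mul_factorial (Nat.le_add_right N s)
  rwa [Nat.add_sub_cancel_left] at this

lemma cmul_spec (M : ℕ) : ∀ l : List ℕ,
    cmul M l * ((l.map Nat.factorial).prod * M.factorial) = (M + l.sum).factorial
  | [] => by simp [cmul]
  | N :: rest => by
    have h := cmul_spec M rest
    have hch := choose_fact N (M + rest.sum)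
    simp only [cmul, List.map_cons, List.prod_cons, List.sum_cons]
    calc ((N + (M + rest.sum)).choose N * cmul M rest) *
          ((N.factorial * (rest.map Nat.factorial).prod) * M.factorial)
        = ((N + (M + rest.sum)).choose N * N.factorial) *
            (cmul M rest * ((rest.map Nat.factorial).prod * M.factorial)) := by ring
      _ = ((N + (M + rest.sum)).choose N * N.factorial) * (M + rest.sum).factorial := by rw [h]
      _ = (N + (M + rest.sum)).factorial := hch
      _ = (M + (N + rest.sum)).factorial := by
          rw [show N + (M + rest.sum) = M + (N + rest.sum) from by omega]

lemma hfac_aux (N s : ℕ) : (N.factorial : ℝ) * s.factorial / (N + s + 1).factorial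
    = (((N + s).choose N : ℝ))⁻¹ * (((N + s + 1 : ℕ)) : ℝ)⁻¹ := by
  have h1 : ((N + s).choose N : ℝ) * N.factorial * s.factorial = ((N + s).factorial : ℝ) := by
    exact_mod_cast choose_fact N s
  have hch : ((N + s).choose N : ℝ) ≠ 0 := by
    have := Nat.choose_pos (Nat.le_add_right N s)
    positivity
  have hf : ((N + s).factorial : ℝ) ≠ 0 := by exact_mod_cast (N + s).factorial_ne_zero
  have hk : ((N + s + 1 : ℕ) : ℝ) ≠ 0 := by positivity
  rw [Nat.factorial_succ]
  push_cast
  push_cast at h1 hch hf hk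
  field_simp
  linear_combination h1

lemma betaFac_ge (n M : ℕ) : ∀ l : List ℕ, M + l.sum ≤ n →
    ((cmul M l : ℝ))⁻¹ * (((n:ℝ)+1)⁻¹) ^ l.length ≤ betaFac M l
  | [], _ => by simp [cmul, betaFac]
  | N :: rest, hle => by
    have hc : (N :: rest).sum = N + rest.sum := List.sum_cons
    have ih := betaFac_ge n M rest (by omega)
    simp only [cmul, betaFac, List.length_cons, List.sum_cons]
    rw [hfac_aux N (M + rest.sum)]
    have hcast : ((N + (M + rest.sum) + 1 : ℕ) : ℝ) ≤ (n : ℝ) + 1 := by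
      calc ((N + (M + rest.sum) + 1 : ℕ) : ℝ) ≤ ((n + 1 : ℕ) : ℝ) := Nat.cast_le.mpr (by omega)
        _ = (n : ℝ) + 1 := by push_cast; ring
    have hinvle : ((n:ℝ)+1)⁻¹ ≤ (((N + (M + rest.sum) + 1 : ℕ)) : ℝ)⁻¹ :=
      inv_anti₀ (by positivity) hcast
    calc ((((N + (M + rest.sum)).choose N : ℕ) * cmul M rest : ℕ) : ℝ)⁻¹ *
          (((n:ℝ)+1)⁻¹) ^ (rest.length + 1)
        = (((N + (M + rest.sum)).choose N : ℝ))⁻¹ * (((n:ℝ))+1)⁻¹ *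
            (((cmul M rest : ℝ))⁻¹ * (((n:ℝ)+1)⁻¹) ^ rest.length) := by
          push_cast
          rw [mul_inv, pow_succ]
          ring
      _ ≤ (((N + (M + rest.sum)).choose N : ℝ))⁻¹ * (((N + (M + rest.sum) + 1 : ℕ) : ℝ))⁻¹ *
            (((cmul M rest : ℝ))⁻¹ * (((n:ℝ)+1)⁻¹) ^ rest.length) := by
          gcongr
      _ ≤ (((N + (M + rest.sum)).choose N : ℝ))⁻¹ * (((N + (M + rest.sum) + 1 : ℕ) : ℝ))⁻¹ *
            betaFac M rest := by
          gcongr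

lemma list_range_prod {M : Type*} [CommMonoid M] (f : ℕ → M) (n : ℕ) :
    ((List.range n).map f).prod = ∏ j ∈ Finset.range n, f j := by
  induction n with
  | zero => simp
  | succ n ih =>
      rw [List.range_succ, List.map_append, List.prod_append, Finset.prod_range_succ, ih]
      simp

lemma list_range_sum (f : ℕ → ℕ) (n : ℕ) :
    ((List.range n).map f).sum = ∑ j ∈ Finset.range n, f j := by
  induction n with
  | zero => simp
  | succ n ih =>
      rw [List.range_succ, List.map_append, List.sum_append, Finset.sum_range_succ, ih]
      simp

/-- Lower bound on the general de Finetti state (0-based indexing: `t 0,…,t d` and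
`N 0,…,N d` play the roles of `t₁,…,t_{d+1}` and `N₁,…,N_{d+1}`): the value
`τ(a|x) = ∫₀^{c₁} dp₁/c₁ ⋯ ∫₀^{c_d} dp_d/c_d  p₁^{N₁}⋯p_d^{N_d}
  [(1/t_{d+1})(1-Σ_{j≤d} t_j p_j)]^{N_{d+1}}`
is at least `Π_{j=1}^{d+1} (1/t_j)^{N_j} · multinomial(n; N₁,…,N_{d+1})⁻¹ · (n+1)^{-d}`. -/
theorem deFinetti_state_lower_bound (d n : ℕ) (t : ℕ → ℕ) (N : ℕ → ℕ)
    (ht : ∀ j, 0 < t j)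
    (hsum : ∑ j ∈ Finset.range (d + 1), N j = n) :
    (∏ j ∈ Finset.range (d + 1), ((t j : ℝ))⁻¹ ^ (N j)) *
        ((Nat.multinomial (Finset.range (d + 1)) N : ℝ))⁻¹ * (((n : ℝ) + 1))⁻¹ ^ d ≤
      ((t d : ℝ))⁻¹ ^ (N d) *
        deFinettiInt (N d) ((List.range d).map (fun j => ((t j : ℝ), N j))) 1 := by
  set l := (List.range d).map (fun j => ((t j : ℝ), N j)) with hl
  have hmapsnd : l.map Prod.snd = (List.range d).map N := by
    simp [hl, List.map_map, Function.comp]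
  have hmapfst : (l.map fun p => (p.1)⁻¹ ^ p.2).prod
      = ∏ j ∈ Finset.range d, ((t j:ℝ))⁻¹ ^ N j := by
    rw [hl, List.map_map, ← list_range_prod (fun j => ((t j:ℝ))⁻¹ ^ N j) d]
    rfl
  have hsumsnd : (l.map Prod.snd).sum = ∑ j ∈ Finset.range d, N j := by
    rw [hmapsnd, list_range_sum]
  have hlen : (l.map Prod.snd).length = d := by simp [hl]
  have hNd : N d + ∑ j ∈ Finset.range d, N j = n := by
    rw [Finset.sum_range_succ] at hsum; omega
  have hlpos : ∀ p ∈ l, 0 < p.1 := by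
    intro p hp
    simp only [hl, List.mem_map, List.mem_range] at hp
    obtain ⟨j, _, rfl⟩ := hp
    have h0 : (0:ℝ) < (t j : ℝ) := by exact_mod_cast ht j
    simpa using h0
  have heval := deFinettiInt_eval (N d) l 1 hlpos one_pos
  rw [one_pow] at heval
  have hge := betaFac_ge n (N d) (l.map Prod.snd) (by rw [hsumsnd]; omega)
  rw [hlen] at hge
  -- multinomial = cmul
  have hfp : ((l.map Prod.snd).map Nat.factorial).prod
      = ∏ j ∈ Finset.range d, (N j).factorial := by
    rw [hmapsnd, List.map_map, ← list_range_prod (fun j => (N j).factorial) d]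
    rfl
  have h2 := cmul_spec (N d) (l.map Prod.snd)
  rw [hfp, hsumsnd, hNd] at h2
  have h1 := Nat.multinomial_spec (Finset.range (d+1)) N
  rw [hsum, Finset.prod_range_succ] at h1
  have hcm : Nat.multinomial (Finset.range (d+1)) N = cmul (N d) (l.map Prod.snd) := by
    have hpos : 0 < (∏ j ∈ Finset.range d, (N j).factorial) * (N d).factorial :=
      Nat.mul_pos (Finset.prod_pos fun i _ => (N i).factorial_pos) (N d).factorial_pos
    apply Nat.eq_of_mul_eq_mul_right hpos
    calc Nat.multinomial (Finset.range (d+1)) N *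
          ((∏ j ∈ Finset.range d, (N j).factorial) * (N d).factorial)
        = (∏ j ∈ Finset.range d, (N j).factorial) * (N d).factorial *
            Nat.multinomial (Finset.range (d+1)) N := by ring
      _ = n.factorial := h1
      _ = cmul (N d) (l.map Prod.snd) *
            ((∏ j ∈ Finset.range d, (N j).factorial) * (N d).factorial) := h2.symm
  rw [heval, hcm, Finset.prod_range_succ, ← hmapfst]
  have hprodnn : 0 ≤ (l.map fun p => (p.1)⁻¹ ^ p.2).prod := by
    apply List.prod_nonneg
    intro x hx
    simp only [List.mem_map] at hx
    obtain ⟨p, hp, rfl⟩ := hx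
    have hpp := hlpos p hp
    show (0:ℝ) ≤ (p.1)⁻¹ ^ p.2
    positivity
  calc ((l.map fun p => (p.1)⁻¹ ^ p.2).prod * ((t d:ℝ))⁻¹ ^ N d) *
        ((cmul (N d) (l.map Prod.snd) : ℝ))⁻¹ * (((n:ℝ)+1))⁻¹ ^ d
      = ((t d:ℝ))⁻¹ ^ N d * ((l.map fun p => (p.1)⁻¹ ^ p.2).prod *
          (((cmul (N d) (l.map Prod.snd) : ℝ))⁻¹ * ((((n:ℝ)+1))⁻¹) ^ d)) := by ring
    _ ≤ ((t d:ℝ))⁻¹ ^ N d * ((l.map fun p => (p.1)⁻¹ ^ p.2).prod *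
          betaFac (N d) (l.map Prod.snd)) := by gcongr
    _ = ((t d:ℝ))⁻¹ ^ N d * ((l.map fun p => (p.1)⁻¹ ^ p.2).prod * 1 *
          betaFac (N d) (l.map Prod.snd)) := by ring
end

section
/- Under the hypotheses of the general de Finetti reduction—P a permutation invariant conditional probability distribution on A^n × X^n with symmetry S encoded by a single-party state Q with parameters p₁,…,p_d appearing t₁,…,t_d times per input vector and unfree entry appearing t_{d+1} times—the pointwise upper bound P(a|x) ≤ Π_{j=1}^{d+1} (1/t_j)^{N_j} · multinomial(n; N₁,…,N_{d+1})⁻¹ holds, where N_j is the number of coordinates i with color j under the coloring induced by Q. -/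
open Finset Nat

/-- A permutation of `Fin n` does not change fiber cardinalities. -/
lemma card_filter_comp_perm {n : ℕ} (σ : Equiv.Perm (Fin n)) (p : Fin n → Prop)
    [DecidablePred p] :
    (Finset.univ.filter (fun i => p (σ i))).card = (Finset.univ.filter p).card := by
  apply Finset.card_bij (fun i _ => σ i)
  · intro a ha; simp only [mem_filter, mem_univ, true_and] at ha ⊢; exact ha
  · intro a₁ _ a₂ _ h; exact σ.injective h
  · intro b hb
    refine ⟨σ.symm b, ?_, by simp⟩
    simp only [mem_filter, mem_univ, true_and] at hb ⊢
    simpa using hb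

/-- If two tuples have the same fiber cardinalities for every color, there is a
permutation carrying one coloring to the other. -/
lemma exists_perm_of_counts {n e : ℕ} (c c' : Fin n → Fin e)
    (h : ∀ j, (Finset.univ.filter (fun i => c' i = j)).card
        = (Finset.univ.filter (fun i => c i = j)).card) :
    ∃ σ : Equiv.Perm (Fin n), ∀ i, c (σ i) = c' i := by
  have e' : ∀ j, {i // c' i = j} ≃ {i // c i = j} := fun j =>
    Fintype.equivOfCardEq (by rw [Fintype.card_subtype, Fintype.card_subtype]; exact h j)
  exact ⟨Equiv.ofFiberEquiv e', fun i => Equiv.ofFiberEquiv_map e' i⟩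

/-- Coordinatewise replacement by pairs of the same color leaves `P` unchanged. -/
lemma replace_of_same_color {n m l d : ℕ}
    (P : (Fin n → Fin l) → (Fin n → Fin m) → ℝ)
    (col : Fin m → Fin l → Fin (d + 1))
    (hsym : ∀ (a : Fin n → Fin l) (x : Fin n → Fin m) (i : Fin n) (a' : Fin l) (x' : Fin m),
      col (x i) (a i) = col x' a' →
      P (Function.update a i a') (Function.update x i x') = P a x)
    (b : Fin n → Fin l) (y : Fin n → Fin m) (a' : Fin n → Fin l) (x' : Fin n → Fin m)
    (h : ∀ i, col (y i) (b i) = col (x' i) (a' i)) : P a' x' = P b y := by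
  classical
  have main : ∀ s : Finset (Fin n),
      P (fun i => if i ∈ s then a' i else b i) (fun i => if i ∈ s then x' i else y i)
        = P b y := by
    intro s
    induction s using Finset.induction_on with
    | empty => simp
    | insert k s hk ih =>
      have e1 : (fun i => if i ∈ insert k s then a' i else b i)
          = Function.update (fun i => if i ∈ s then a' i else b i) k (a' k) := by
        funext i
        rcases eq_or_ne i k with rfl | hik
        · simp
        · simp [Function.update_apply, hik, Finset.mem_insert]
      have e2 : (fun i => if i ∈ insert k s then x' i else y i)
          = Function.update (fun i => if i ∈ s then x' i else y i) k (x' k) := by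
        funext i
        rcases eq_or_ne i k with rfl | hik
        · simp
        · simp [Function.update_apply, hik, Finset.mem_insert]
      rw [e1, e2, hsym _ _ k (a' k) (x' k) (by simpa [hk] using h k), ih]
  simpa using main Finset.univ

/-- Upper bound on permutation invariant states with symmetry `S` (Lemma on upper
bounding): the symmetry is encoded by a coloring `col` of single-party (input, output)
pairs with `d+1` colors (colors `0,…,d-1` for the free parameters `p₁,…,p_d` and color `d`
for the unfree entry), each color `j` appearing exactly `t j` times in every input vector.
If changing one coordinate to a pair of the same color leaves `P` unchanged and `P` is
permutation invariant, then
`P(a|x) ≤ Π_j (1/t_j)^{N_j} · multinomial(n; N₀,…,N_d)⁻¹`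
where `N_j` is the number of coordinates of color `j`. -/
theorem symmetric_state_upper_bound (n m l d : ℕ)
    (P : (Fin n → Fin l) → (Fin n → Fin m) → ℝ)
    (col : Fin m → Fin l → Fin (d + 1))
    (t : Fin (d + 1) → ℕ)
    (hpos : ∀ a x, 0 ≤ P a x)
    (hsum : ∀ x, ∑ a : Fin n → Fin l, P a x = 1)
    (hperm : ∀ (π : Equiv.Perm (Fin n)) a x, P (a ∘ π) (x ∘ π) = P a x)
    (hcount : ∀ (x₁ : Fin m) (j : Fin (d + 1)),
      (Finset.univ.filter (fun a₁ : Fin l => col x₁ a₁ = j)).card = t j)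
    (hsym : ∀ (a : Fin n → Fin l) (x : Fin n → Fin m) (i : Fin n) (a' : Fin l) (x' : Fin m),
      col (x i) (a i) = col x' a' →
      P (Function.update a i a') (Function.update x i x') = P a x)
    (a : Fin n → Fin l) (x : Fin n → Fin m) :
    P a x ≤ (∏ j : Fin (d + 1),
        ((t j : ℝ))⁻¹ ^ ((Finset.univ.filter (fun i => col (x i) (a i) = j)).card)) *
      ((Nat.multinomial Finset.univ
        (fun j : Fin (d + 1) =>
          (Finset.univ.filter (fun i => col (x i) (a i) = j)).card) : ℝ))⁻¹ := by
  classical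
  set c : Fin n → Fin (d + 1) := fun i => col (x i) (a i) with hc
  set N : Fin (d + 1) → ℕ :=
    fun j => (Finset.univ.filter (fun i => col (x i) (a i) = j)).card with hN
  have hNdef : ∀ j, N j = (Finset.univ.filter (fun i => c i = j)).card := fun j => rfl
  -- the set of colorings with the same counts
  set T : Finset (Fin n → Fin (d + 1)) :=
    Finset.univ.filter
      (fun c' => ∀ j, (Finset.univ.filter (fun i => c' i = j)).card = N j) with hT
  -- the set of output strings with the same counts
  set S : Finset (Fin n → Fin l) :=
    Finset.univ.filter
      (fun a' => ∀ j, (Finset.univ.filter (fun i => col (x i) (a' i) = j)).card = N j)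
      with hS
  have haS : a ∈ S := by
    rw [hS, Finset.mem_filter]
    exact ⟨Finset.mem_univ _, fun j => rfl⟩
  -- sum of counts is n
  have hNsum : ∑ j, N j = n := by
    simp only [hNdef]
    rw [← Finset.card_eq_sum_card_fiberwise (fun i _ => Finset.mem_univ (c i))]
    simp
  -- cardinality of the stabilizer
  have hstab : (Finset.univ.filter (fun τ : Equiv.Perm (Fin n) => c ∘ τ = c)).card
      = ∏ j, (N j)! := by
    have h1 := DomMulAct.stabilizer_card c
    rw [Fintype.card_subtype] at h1
    rw [h1]
    refine Finset.prod_congr rfl fun j _ => ?_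
    rw [Fintype.card_subtype, hNdef]
  -- counting colorings with the same counts
  have hTmul : T.card * ∏ j, (N j)! = n ! := by
    have hmaps : ∀ σ : Equiv.Perm (Fin n), σ ∈ Finset.univ → (c ∘ ⇑σ) ∈ T := by
      intro σ _
      rw [hT, Finset.mem_filter]
      refine ⟨Finset.mem_univ _, fun j => ?_⟩
      rw [hNdef]
      exact card_filter_comp_perm σ (fun i => c i = j)
    have hcard := Finset.card_eq_sum_card_fiberwise hmaps
    have huniv : (Finset.univ : Finset (Equiv.Perm (Fin n))).card = n ! := by
      rw [Finset.card_univ, Fintype.card_perm, Fintype.card_fin]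
    have hfib : ∀ c' ∈ T,
        (Finset.univ.filter (fun σ : Equiv.Perm (Fin n) => c ∘ ⇑σ = c')).card
          = ∏ j, (N j)! := by
      intro c' hc'
      rw [hT, Finset.mem_filter] at hc'
      obtain ⟨σ₀, hσ₀⟩ := exists_perm_of_counts c c'
        (fun j => by rw [hc'.2 j, hNdef])
      rw [← hstab]
      refine (Finset.card_bij (fun τ _ => τ * σ₀) ?_ ?_ ?_).symm
      · intro τ hτ
        rw [Finset.mem_filter] at hτ ⊢
        refine ⟨Finset.mem_univ _, ?_⟩
        funext i
        have := congrFun hτ.2 (σ₀ i)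
        simpa [hσ₀ i] using this
      · intro τ₁ _ τ₂ _ h
        exact mul_right_cancel h
      · intro σ hσ
        rw [Finset.mem_filter] at hσ
        refine ⟨σ * σ₀⁻¹, ?_, by group⟩
        rw [Finset.mem_filter]
        refine ⟨Finset.mem_univ _, ?_⟩
        funext k
        have h1 : c (σ (σ₀⁻¹ k)) = c' (σ₀⁻¹ k) := congrFun hσ.2 (σ₀⁻¹ k)
        have h2 : c' (σ₀⁻¹ k) = c (σ₀ (σ₀⁻¹ k)) := (hσ₀ _).symm
        simp only [Function.comp_apply, Equiv.Perm.mul_apply]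
        rw [h1, h2]
        simp
    rw [Finset.sum_congr rfl hfib, Finset.sum_const, smul_eq_mul] at hcard
    rw [← hcard, huniv]
  have hmulti : Nat.multinomial Finset.univ N * ∏ j, (N j)! = n ! := by
    have := Nat.multinomial_spec Finset.univ N
    rw [mul_comm] at this
    rw [this, hNsum]
  have hTcard : T.card = Nat.multinomial Finset.univ N := by
    have hpos' : 0 < ∏ j, (N j)! :=
      Finset.prod_pos fun j _ => Nat.factorial_pos _
    exact Nat.eq_of_mul_eq_mul_right hpos' (hTmul.trans hmulti.symm)
  -- counting strings with the same counts
  have hScard : S.card = T.card * ∏ j, t j ^ N j := by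
    have hmaps : ∀ a' ∈ S, (fun i => col (x i) (a' i)) ∈ T := by
      intro a' ha'
      rw [hS, Finset.mem_filter] at ha'
      rw [hT, Finset.mem_filter]
      exact ⟨Finset.mem_univ _, ha'.2⟩
    have hcard := Finset.card_eq_sum_card_fiberwise hmaps
    have hfib : ∀ c' ∈ T,
        (S.filter (fun a' => (fun i => col (x i) (a' i)) = c')).card = ∏ j, t j ^ N j := by
      intro c' hc'
      rw [hT, Finset.mem_filter] at hc'
      have hset : S.filter (fun a' => (fun i => col (x i) (a' i)) = c')
          = Fintype.piFinset (fun i => Finset.univ.filter (fun v => col (x i) v = c' i)) := by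
        ext a'
        simp only [Finset.mem_filter, Fintype.mem_piFinset, Finset.mem_univ, true_and, hS,
          funext_iff]
        constructor
        · exact fun h => h.2
        · intro h
          refine ⟨fun j => ?_, h⟩
          have hfe : Finset.univ.filter (fun i : Fin n => col (x i) (a' i) = j)
              = Finset.univ.filter (fun i => c' i = j) := by
            apply Finset.filter_congr
            intro i _
            rw [h i]
          rw [hfe]
          exact hc'.2 j
      rw [hset, Fintype.card_piFinset]
      have h1 : ∀ i, (Finset.univ.filter (fun v => col (x i) v = c' i)).card = t (c' i) :=
        fun i => hcount (x i) (c' i)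
      calc ∏ i, (Finset.univ.filter (fun v => col (x i) v = c' i)).card
          = ∏ i, t (c' i) := Finset.prod_congr rfl fun i _ => h1 i
        _ = ∏ j, ∏ i ∈ Finset.univ.filter (fun i => c' i = j), t (c' i) :=
            (Finset.prod_fiberwise_of_maps_to (fun i _ => Finset.mem_univ (c' i)) _).symm
        _ = ∏ j, t j ^ N j := by
            refine Finset.prod_congr rfl fun j _ => ?_
            have he : ∀ i ∈ Finset.univ.filter (fun i => c' i = j), t (c' i) = t j := by
              intro i hi
              rw [Finset.mem_filter] at hi
              rw [hi.2]
            rw [Finset.prod_congr rfl he, Finset.prod_const, hc'.2 j]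
    rw [Finset.sum_congr rfl hfib, Finset.sum_const, smul_eq_mul] at hcard
    rw [hcard]
  -- every member of S has the same probability
  have key : ∀ a' ∈ S, P a' x = P a x := by
    intro a' ha'
    rw [hS, Finset.mem_filter] at ha'
    obtain ⟨σ, hσ⟩ := exists_perm_of_counts c (fun i => col (x i) (a' i))
      (fun j => by rw [ha'.2 j, hNdef])
    have h1 : P a' x = P (a ∘ σ) (x ∘ σ) := by
      apply replace_of_same_color P col hsym
      intro i
      exact hσ i
    rw [h1, hperm]
  -- summing over S
  have hsumS : (S.card : ℝ) * P a x ≤ 1 := by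
    have h1 : ∑ a' ∈ S, P a' x = (S.card : ℝ) * P a x := by
      rw [Finset.sum_congr rfl key, Finset.sum_const, nsmul_eq_mul]
    have h2 : ∑ a' ∈ S, P a' x ≤ ∑ a' : Fin n → Fin l, P a' x :=
      Finset.sum_le_sum_of_subset_of_nonneg (Finset.subset_univ S)
        (fun b _ _ => hpos b x)
    rw [h1, hsum x] at h2
    exact h2
  have hSpos : 0 < S.card := Finset.card_pos.mpr ⟨a, haS⟩
  -- final algebra
  have hRHS : (∏ j : Fin (d + 1), ((t j : ℝ))⁻¹ ^ N j)
      * ((Nat.multinomial Finset.univ N : ℝ))⁻¹ = ((S.card : ℝ))⁻¹ := by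
    have h1 : (S.card : ℝ) = (Nat.multinomial Finset.univ N : ℝ) * ∏ j, (t j : ℝ) ^ N j := by
      rw [hScard, hTcard]
      push_cast
      ring
    have h2 : (∏ j, ((t j : ℝ))⁻¹ ^ N j) = (∏ j, (t j : ℝ) ^ N j)⁻¹ := by
      rw [← Finset.prod_inv_distrib]
      exact Finset.prod_congr rfl fun j _ => inv_pow _ _
    rw [h2, h1, mul_inv, mul_comm]
  have hNdef2 : ∀ j : Fin (d + 1),
      (Finset.univ.filter (fun i => col (x i) (a i) = j)).card = N j := fun j => rfl
  simp only [hNdef2]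
  calc P a x ≤ ((S.card : ℝ))⁻¹ := by
        rw [← one_div, le_div_iff₀ (by exact_mod_cast hSpos)]
        linarith [hsumS]
      _ = _ := hRHS.symm
end
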